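/- Let F_q be a finite field, n, m ∈ ℕ with m < q^n, X = {x_1,...,x_m} ⊂ F_q^n a set of m distinct points, > a monomial order, and (u_1,...,u_s) a cleaned kernel basis of ker(Φ_X) ⊆ F_n(F_q) with respect to the monomial function basis (i.e., the coordinate matrix of the u_i is in reduced row echelon form). Then the family (τ_1^q − τ_1,...,τ_n^q − τ_n, φ^{-1}(u_1),...,φ^{-1}(u_s)) is a Gröbner basis of the vanishing ideal I(X) with respect to >. -/

import Mathlib

open MvPolynomial

/-- The leading monomial (multidegree) of a multivariate polynomial with respect to
a monomial order. -/
noncomputable def leadingMonomial {K : Type*} [CommSemiring K] {σ : Type*}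
    (m : MonomialOrder σ) (p : MvPolynomial σ K) : σ →₀ ℕ :=
  m.toSyn.symm (p.support.sup m.toSyn)

/-- The family `G` is a Gröbner basis of the ideal `I` with respect to the monomial
order `m`: `G` generates `I` and the leading monomial of every nonzero element of `I`
is divisible by the leading monomial of some nonzero member of the family `G`. -/
def IsGroebnerBasis {K : Type*} [Field K] {σ ι : Type*} (m : MonomialOrder σ)
    (I : Ideal (MvPolynomial σ K)) (G : ι → MvPolynomial σ K) : Prop :=
  Ideal.span (Set.range G) = I ∧
    ∀ p ∈ I, p ≠ 0 → ∃ i : ι, G i ≠ 0 ∧ leadingMonomial m (G i) ≤ leadingMonomial m p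

/-- The vanishing ideal of a subset `X ⊆ K^n`. -/
def vanishingIdeal (K : Type*) [Field K] (n : ℕ) (X : Set (Fin n → K)) :
    Ideal (MvPolynomial (Fin n) K) where
  carrier := {p | ∀ x ∈ X, MvPolynomial.eval x p = 0}
  zero_mem' := by simp
  add_mem' ha hb x hx := by simp [ha x hx, hb x hx]
  smul_mem' c p hp x hx := by simp [smul_eq_mul, hp x hx]

set_option linter.unusedSectionVars false

section LM
variable {K : Type*} [CommSemiring K] {σ : Type*} (mo : MonomialOrder σ)

lemma toSyn_lm (p : MvPolynomial σ K) :
    mo.toSyn (leadingMonomial mo p) = p.support.sup mo.toSyn := by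
  simp [leadingMonomial]

lemma lm_mem_support {p : MvPolynomial σ K} (hp : p ≠ 0) :
    leadingMonomial mo p ∈ p.support := by
  obtain ⟨b, hb, he⟩ := Finset.exists_mem_eq_sup p.support
    (support_nonempty.2 hp) mo.toSyn
  have : leadingMonomial mo p = b := by
    rw [leadingMonomial, he]; exact mo.toSyn.symm_apply_apply b
  rwa [this]

lemma le_toSyn_lm {p : MvPolynomial σ K} {d : σ →₀ ℕ} (hd : d ∈ p.support) :
    mo.toSyn d ≤ mo.toSyn (leadingMonomial mo p) := by
  rw [toSyn_lm]; exact Finset.le_sup hd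

lemma toSyn_lm_le {p : MvPolynomial σ K} {b : σ →₀ ℕ}
    (h : ∀ d ∈ p.support, mo.toSyn d ≤ mo.toSyn b) :
    mo.toSyn (leadingMonomial mo p) ≤ mo.toSyn b := by
  rw [toSyn_lm]; exact Finset.sup_le h

lemma lm_coeff_ne_zero {p : MvPolynomial σ K} (hp : p ≠ 0) :
    p.coeff (leadingMonomial mo p) ≠ 0 :=
  mem_support_iff.mp (lm_mem_support mo hp)

end LM

section FE
variable {K : Type*} [CommRing K] [Nontrivial K] {σ : Type*} [DecidableEq σ] (mo : MonomialOrder σ)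
variable {q : ℕ} (hq : 2 ≤ q)

lemma fe_eq (i : σ) : (X i ^ q - X i : MvPolynomial σ K) =
    monomial (Finsupp.single i q) 1 - monomial (Finsupp.single i 1) 1 := by
  rw [X_pow_eq_monomial, X]

include hq

lemma coeff_fe (d : σ →₀ ℕ) (i : σ) :
    coeff d (X i ^ q - X i : MvPolynomial σ K) =
      (if Finsupp.single i q = d then 1 else 0) -
      (if Finsupp.single i 1 = d then 1 else 0) := by
  rw [fe_eq, coeff_sub, coeff_monomial, coeff_monomial]

lemma single_ne (i : σ) : (Finsupp.single i q : σ →₀ ℕ) ≠ Finsupp.single i 1 := by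
  intro h
  have := congrArg (fun f : σ →₀ ℕ => f i) h
  simp at this
  omega

lemma fe_ne_zero (i : σ) : (X i ^ q - X i : MvPolynomial σ K) ≠ 0 := by
  intro h
  have := coeff_fe (K := K) hq (Finsupp.single i q) i
  rw [h] at this
  rw [if_pos rfl, if_neg (single_ne hq i).symm] at this
  simp at this

lemma fe_support_subset (i : σ) :
    (X i ^ q - X i : MvPolynomial σ K).support ⊆
      {Finsupp.single i q, Finsupp.single i 1} := by
  intro d hd
  rw [mem_support_iff, coeff_fe hq] at hd
  by_contra hcon
  simp only [Finset.mem_insert, Finset.mem_singleton, not_or] at hcon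
  rw [if_neg (Ne.symm hcon.1), if_neg (Ne.symm hcon.2)] at hd
  simp at hd

lemma lm_fe (i : σ) :
    leadingMonomial mo (X i ^ q - X i : MvPolynomial σ K) = Finsupp.single i q := by
  have h1 : Finsupp.single i q ∈ (X i ^ q - X i : MvPolynomial σ K).support := by
    rw [mem_support_iff, coeff_fe hq]
    rw [if_pos rfl, if_neg (single_ne hq i).symm]
    simp
  apply mo.toSyn.injective
  apply le_antisymm
  · apply toSyn_lm_le
    intro d hd
    rcases Finset.mem_insert.1 (fe_support_subset hq i hd) with h | h
    · rw [h]
    · rw [Finset.mem_singleton] at h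
      rw [h]
      exact mo.toSyn_monotone (by simp [Finsupp.single_le_iff]; omega)
  · exact le_toSyn_lm mo h1

end FE

section Reduce
variable {K : Type*} [CommRing K] [Nontrivial K] {σ : Type*} [DecidableEq σ]
variable (mo : MonomialOrder σ) {q : ℕ} (hq : 2 ≤ q)

include hq

lemma reduce (f : MvPolynomial σ K) :
    ∃ r : MvPolynomial σ K,
      f - r ∈ Ideal.span (Set.range fun i : σ => (X i ^ q - X i : MvPolynomial σ K)) ∧
      (∀ d ∈ r.support, ∀ i, d i < q) ∧
      (∀ d ∈ r.support, ∃ d' ∈ f.support, mo.toSyn d ≤ mo.toSyn d') ∧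
      (∀ d : σ →₀ ℕ, (∀ i, d i < q) → (∀ d' ∈ f.support, mo.toSyn d' ≤ mo.toSyn d) →
        coeff d r = coeff d f) := by
  classical
  set FE := Ideal.span (Set.range fun i : σ => (X i ^ q - X i : MvPolynomial σ K)) with hFE
  suffices H : ∀ s : mo.syn, ∀ f : MvPolynomial σ K,
      (f.support.filter (fun d => ¬ ∀ i, d i < q)).sup mo.toSyn = s →
      ∃ r : MvPolynomial σ K,
      f - r ∈ FE ∧
      (∀ d ∈ r.support, ∀ i, d i < q) ∧
      (∀ d ∈ r.support, ∃ d' ∈ f.support, mo.toSyn d ≤ mo.toSyn d') ∧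
      (∀ d : σ →₀ ℕ, (∀ i, d i < q) → (∀ d' ∈ f.support, mo.toSyn d' ≤ mo.toSyn d) →
        coeff d r = coeff d f) by
    exact H _ f rfl
  intro s
  induction s using WellFoundedLT.induction with
  | _ s ih =>
  intro f hfs
  by_cases hB : (f.support.filter (fun d => ¬ ∀ i, d i < q)) = ∅
  · refine ⟨f, by simp [Ideal.zero_mem], ?_, fun d hd => ⟨d, hd, le_rfl⟩, fun _ _ _ => rfl⟩
    intro d hd
    by_contra hcon
    have : d ∈ f.support.filter (fun d => ¬ ∀ i, d i < q) := Finset.mem_filter.2 ⟨hd, hcon⟩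
    rw [hB] at this
    exact absurd this (Finset.notMem_empty d)
  · -- nonempty case
    have hBne : (f.support.filter (fun d => ¬ ∀ i, d i < q)).Nonempty :=
      Finset.nonempty_of_ne_empty hB
    obtain ⟨e, heB, hesup⟩ := Finset.exists_mem_eq_sup _ hBne mo.toSyn
    obtain ⟨hesupp, hered⟩ := Finset.mem_filter.1 heB
    push_neg at hered
    obtain ⟨i, hi⟩ := hered
    set δ : σ →₀ ℕ := e - Finsupp.single i q with hδ
    have hsingle_le : Finsupp.single i q ≤ e := Finsupp.single_le_iff.2 hi
    have hadd : δ + Finsupp.single i q = e := tsub_add_cancel_of_le hsingle_le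
    set e₂ : σ →₀ ℕ := δ + Finsupp.single i 1 with he₂
    have he2lt : mo.toSyn e₂ < mo.toSyn e := by
      apply mo.toSyn_strictMono
      rw [← hadd, he₂]
      apply lt_of_le_of_ne
      · exact add_le_add le_rfl (Finsupp.single_le_single.2 (by omega))
      · intro h
        have := congrArg (fun f : σ →₀ ℕ => f i) h
        simp [Finsupp.single_apply] at this
        omega
    have he2ne : e₂ ≠ e := fun h => absurd (h ▸ he2lt) (lt_irrefl _)
    set c : K := coeff e f with hc
    set step : MvPolynomial σ K := (monomial δ c) * (X i ^ q - X i) with hstep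
    have hstepFE : step ∈ FE := Ideal.mul_mem_left _ _ (Ideal.subset_span ⟨i, rfl⟩)
    have hstep_eq : step = monomial e c - monomial e₂ c := by
      rw [hstep, fe_eq, mul_sub, monomial_mul, monomial_mul, hadd, he₂, mul_one]
    set f' : MvPolynomial σ K := f - step with hf'
    have hcoeff : ∀ d, coeff d f' =
        coeff d f - (if e = d then c else 0) + (if e₂ = d then c else 0) := by
      intro d
      rw [hf', hstep_eq, coeff_sub, coeff_sub, coeff_monomial, coeff_monomial]
      ring
    have hce : coeff e f' = 0 := by
      rw [hcoeff, if_pos rfl, if_neg he2ne, hc]; ring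
    have hsupp : ∀ d ∈ f'.support, d ∈ f.support ∨ d = e₂ := by
      intro d hd
      rw [mem_support_iff, hcoeff] at hd
      by_contra hcon
      push_neg at hcon
      rw [mem_support_iff, not_not] at hcon
      have hde : e ≠ d := by
        intro h; rw [← h] at hcon; exact (mem_support_iff.1 hesupp) hcon.1
      rw [hcon.1, if_neg hde, if_neg (fun h => hcon.2 h.symm)] at hd
      simp at hd
    have hepos : (⊥ : mo.syn) < mo.toSyn e := by
      rcases eq_or_lt_of_le (bot_le : (⊥ : mo.syn) ≤ mo.toSyn e) with h | h
      · exfalso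
        have : e = 0 := by
          apply mo.toSyn.injective
          rw [map_zero, ← mo.bot_eq_zero, h]
        rw [this] at hi
        simp at hi; omega
      · exact h
    have hmeas : (f'.support.filter (fun d => ¬ ∀ i, d i < q)).sup mo.toSyn < s := by
      rw [← hfs, hesup]
      rw [Finset.sup_lt_iff hepos]
      intro d hd
      obtain ⟨hd1, hd2⟩ := Finset.mem_filter.1 hd
      have hdne : d ≠ e := by
        intro h
        rw [h, mem_support_iff] at hd1
        exact hd1 hce
      rcases hsupp d hd1 with h | h
      · have : d ∈ f.support.filter (fun d => ¬ ∀ i, d i < q) := Finset.mem_filter.2 ⟨h, hd2⟩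
        have := Finset.le_sup (f := mo.toSyn) this
        rw [hesup] at this
        exact lt_of_le_of_ne this (fun hh => hdne (mo.toSyn.injective hh))
      · rw [h]; exact he2lt
    obtain ⟨r, hr1, hr2, hr3, hr4⟩ := ih _ hmeas f' rfl
    refine ⟨r, ?_, hr2, ?_, ?_⟩
    · have : f - r = step + (f' - r) := by rw [hf']; ring
      rw [this]
      exact Ideal.add_mem _ hstepFE hr1
    · intro d hd
      obtain ⟨d', hd', hle⟩ := hr3 d hd
      rcases hsupp d' hd' with h | h
      · exact ⟨d', h, hle⟩
      · exact ⟨e, hesupp, le_trans hle (le_of_lt (h ▸ he2lt))⟩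
    · intro d hdred hdmax
      have hmax' : ∀ d' ∈ f'.support, mo.toSyn d' ≤ mo.toSyn d := by
        intro d' hd'
        rcases hsupp d' hd' with h | h
        · exact hdmax d' h
        · exact le_trans (le_of_lt (h ▸ he2lt)) (hdmax e hesupp)
      rw [hr4 d hdred hmax', hcoeff]
      have h1 : e ≠ d := by
        intro h; rw [← h] at hdred; exact absurd (hdred i) (by omega)
      have h2 : e₂ ≠ d := by
        intro h
        have := hdmax e hesupp
        rw [← h] at this
        exact absurd (lt_of_lt_of_le he2lt this) (lt_irrefl _)
      rw [if_neg h1, if_neg h2]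
      ring

end Reduce

section Inj
set_option linter.unusedSectionVars false
variable {K : Type*} [Field K] [Fintype K] {n : ℕ}

private noncomputable def monFun (b : Fin n → Fin (Fintype.card K)) : (Fin n → K) → K :=
  fun y => ∏ i, y i ^ (b i : ℕ)

private lemma eval_eq_prod_univ (y : Fin n → K) (h : MvPolynomial (Fin n) K) :
    eval y h = ∑ d ∈ h.support, coeff d h * ∏ i, y i ^ d i := by
  rw [eval_eq]
  apply Finset.sum_congr rfl
  intro d _
  congr 1
  refine Finset.prod_subset (Finset.subset_univ d.support) ?_
  intro i _ hi
  rw [Finsupp.notMem_support_iff.1 hi, pow_zero]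

private lemma monFun_indep :
    LinearIndependent K (monFun (K := K) (n := n)) := by
  classical
  apply linearIndependent_of_top_le_span_of_card_eq_finrank
  · intro f _
    obtain ⟨P, hP1, hP2⟩ := Submodule.mem_map.1
      ((map_restrict_dom_evalₗ K (Fin n)).symm ▸ Submodule.mem_top (x := f))
    rw [mem_restrictDegree] at hP1
    have hqpos : 0 < Fintype.card K := Fintype.card_pos
    have hfP : f = ∑ d ∈ P.support.attach,
        coeff d.1 P • monFun (K := K) (fun i => ⟨d.1 i, by
          have := hP1 d.1 d.2 i; omega⟩) := by
      funext y
      rw [← hP2]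
      simp only [evalₗ_apply, Finset.sum_apply, Pi.smul_apply, smul_eq_mul, monFun]
      rw [eval_eq_prod_univ y P, ← Finset.sum_attach P.support
        (fun d => coeff d P * ∏ i, y i ^ d i)]
    rw [hfP]
    exact Submodule.sum_mem _ fun d _ =>
      Submodule.smul_mem _ _ (Submodule.subset_span ⟨_, rfl⟩)
  · rw [Module.finrank_fintype_fun_eq_card, Fintype.card_fun, Fintype.card_fun]
    simp

private lemma reduced_eval_zero (h : MvPolynomial (Fin n) K)
    (hred : ∀ d ∈ h.support, ∀ i, d i < Fintype.card K)
    (hev : ∀ y, eval y h = 0) : h = 0 := by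
  classical
  set F : (Fin n → Fin (Fintype.card K)) → (Fin n →₀ ℕ) :=
    fun b => Finsupp.equivFunOnFinite.symm (fun i => (b i : ℕ)) with hF
  have hFapp : ∀ b i, F b i = (b i : ℕ) := fun b i => rfl
  have hFinj : Function.Injective F := by
    intro a b hab
    funext i
    have := congrArg (fun d : Fin n →₀ ℕ => d i) hab
    simp only [hFapp] at this
    exact Fin.ext this
  set c : (Fin n → Fin (Fintype.card K)) → K := fun b => coeff (F b) h with hc
  have hzero : ∀ b, c b = 0 := by
    have hsum : ∑ b, c b • monFun (K := K) b = 0 := by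
      funext y
      simp only [Finset.sum_apply, Pi.smul_apply, smul_eq_mul, monFun, Pi.zero_apply]
      have h1 : ∑ b : Fin n → Fin (Fintype.card K), c b * ∏ i, y i ^ (b i : ℕ)
          = ∑ d ∈ Finset.univ.image F, coeff d h * ∏ i, y i ^ d i := by
        rw [Finset.sum_image (fun a _ b _ hab => hFinj hab)]
        apply Finset.sum_congr rfl
        intro b _
        simp only [hc, hFapp]
      rw [h1, ← hev y, eval_eq_prod_univ y h]
      apply (Finset.sum_subset ?_ ?_).symm
      · intro d hd
        apply Finset.mem_image.2
        refine ⟨fun i => ⟨d i, hred d hd i⟩, Finset.mem_univ _, ?_⟩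
        ext i
        simp [hFapp]
      · intro d _ hd
        rw [notMem_support_iff.1 hd, zero_mul]
    have := Fintype.linearIndependent_iff.1 (monFun_indep (K := K) (n := n)) c hsum
    exact this
  by_contra hne
  obtain ⟨d, hd⟩ := support_nonempty.2 hne
  have hb : F (fun i => ⟨d i, hred d hd i⟩) = d := by
    ext i; simp [hFapp]
  have := hzero (fun i => ⟨d i, hred d hd i⟩)
  rw [hc] at this
  simp only [hb] at this
  exact (mem_support_iff.1 hd) this

end Inj

/-- Extending a cleaned kernel basis of `ker Φ_X` by the field equations
`τ_i^q − τ_i` yields a Gröbner basis of the vanishing ideal `I(X)`.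
A cleaned kernel basis is given here by polynomials `p_1, …, p_s ∈ P_q^n` whose
associated functions form a basis of `ker Φ_X`, each with leading coefficient `1`,
and such that the leading monomial of `p_j` does not occur in `p_{j'}` for `j' ≠ j`
(the reduced row echelon form condition). -/
theorem cleaned_kernel_basis_extends_to_groebner_basis
    (K : Type*) [Field K] [Fintype K] (n m : ℕ) (hm : m < Fintype.card K ^ n)
    (x : Fin m → (Fin n → K)) (hx : Function.Injective x)
    (mo : MonomialOrder (Fin n))
    (p : Fin (Fintype.card K ^ n - m) → MvPolynomial (Fin n) K)
    (hP : ∀ j, ∀ d ∈ (p j).support, ∀ i : Fin n, d i < Fintype.card K)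
    (hindep : LinearIndependent K
      (fun j => (fun y : Fin n → K => MvPolynomial.eval y (p j))))
    (hspan : Submodule.span K
        (Set.range fun j => (fun y : Fin n → K => MvPolynomial.eval y (p j))) =
      LinearMap.ker (LinearMap.pi (fun i : Fin m => LinearMap.proj (x i)) :
        ((Fin n → K) → K) →ₗ[K] (Fin m → K)))
    (hlc : ∀ j, MvPolynomial.coeff (leadingMonomial mo (p j)) (p j) = 1)
    (hrref : ∀ j j', j ≠ j' → MvPolynomial.coeff (leadingMonomial mo (p j)) (p j') = 0) :
    IsGroebnerBasis mo (vanishingIdeal K n (Set.range x))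
      (Sum.elim
        (fun i : Fin n => (X i : MvPolynomial (Fin n) K) ^ Fintype.card K - X i)
        p) := by
  classical
  have hq : 2 ≤ Fintype.card K := Fintype.one_lt_card
  set G := Sum.elim
      (fun i : Fin n => (X i : MvPolynomial (Fin n) K) ^ Fintype.card K - X i) p with hGdef
  set I := vanishingIdeal K n (Set.range x) with hIdef
  set Φ : ((Fin n → K) → K) →ₗ[K] (Fin m → K) :=
    LinearMap.pi (fun i : Fin m => LinearMap.proj (x i)) with hΦ
  -- generators of the field-equation ideal vanish everywhere
  have hFE_eval : ∀ g ∈ Ideal.span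
      (Set.range fun i : Fin n => (X i ^ Fintype.card K - X i : MvPolynomial (Fin n) K)),
      ∀ y : Fin n → K, eval y g = 0 := by
    intro g hg y
    have hle : Ideal.span (Set.range fun i : Fin n =>
        (X i ^ Fintype.card K - X i : MvPolynomial (Fin n) K)) ≤ vanishingIdeal K n Set.univ := by
      rw [Ideal.span_le]
      rintro _ ⟨i, rfl⟩
      intro y _
      simp [FiniteField.pow_card]
    exact hle hg y (Set.mem_univ y)
  have hpj_eval : ∀ j k, eval (x k) (p j) = 0 := by
    intro j k
    have hmem : (fun y => eval y (p j)) ∈ LinearMap.ker Φ := by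
      rw [← hspan]
      exact Submodule.subset_span ⟨j, rfl⟩
    have h0 := LinearMap.mem_ker.1 hmem
    have := congrFun h0 k
    simpa [hΦ, LinearMap.pi_apply, LinearMap.proj_apply] using this
  have hGI : ∀ i, G i ∈ I := by
    intro i
    cases i with
    | inl i =>
      intro y _
      simp [hGdef, FiniteField.pow_card]
    | inr j =>
      rintro _ ⟨k, rfl⟩
      simpa [hGdef] using hpj_eval j k
  have hpne : ∀ j, p j ≠ 0 := by
    intro j h
    have := hlc j
    rw [h] at this
    simp at this
  -- the key divisibility statement
  have key : ∀ f ∈ I, f ≠ 0 → ∃ i, G i ≠ 0 ∧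
      leadingMonomial mo (G i) ≤ leadingMonomial mo f := by
    intro f hfI hf0
    by_cases hA : ∃ i, Fintype.card K ≤ leadingMonomial mo f i
    · obtain ⟨i, hi⟩ := hA
      refine ⟨Sum.inl i, ?_, ?_⟩
      · simpa [hGdef] using fe_ne_zero (K := K) hq i
      · have : leadingMonomial mo (G (Sum.inl i)) = Finsupp.single i (Fintype.card K) := by
          simpa [hGdef] using lm_fe (K := K) mo hq i
        rw [this]
        exact Finsupp.single_le_iff.2 hi
    · push_neg at hA
      obtain ⟨r, hr1, hr2, hr3, hr4⟩ := reduce (K := K) mo hq f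
      have hcoefflm : coeff (leadingMonomial mo f) r = coeff (leadingMonomial mo f) f :=
        hr4 _ hA (fun d' hd' => le_toSyn_lm mo hd')
      have hrne : r ≠ 0 := by
        intro h
        apply lm_coeff_ne_zero mo hf0
        rw [← hcoefflm, h, coeff_zero]
      have hlm_rf : leadingMonomial mo r = leadingMonomial mo f := by
        apply mo.toSyn.injective
        apply le_antisymm
        · apply toSyn_lm_le
          intro d hd
          obtain ⟨d', hd', hle⟩ := hr3 d hd
          exact le_trans hle (le_toSyn_lm mo hd')
        · apply le_toSyn_lm
          rw [mem_support_iff, hcoefflm]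
          exact lm_coeff_ne_zero mo hf0
      have hr_eval : ∀ k, eval (x k) r = 0 := by
        intro k
        have h1 : eval (x k) (f - r) = 0 := hFE_eval _ hr1 (x k)
        have h2 : eval (x k) f = 0 := hfI (x k) ⟨k, rfl⟩
        rw [map_sub, h2, zero_sub, neg_eq_zero] at h1
        exact h1
      have hker : (fun y => eval y r) ∈ LinearMap.ker Φ := by
        rw [LinearMap.mem_ker]
        funext k
        simpa [hΦ, LinearMap.pi_apply, LinearMap.proj_apply] using hr_eval k
      rw [← hspan] at hker
      obtain ⟨c, hc⟩ := (Submodule.mem_span_range_iff_exists_fun K).1 hker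
      set g : MvPolynomial (Fin n) K := ∑ j, c j • p j with hgdef
      have hg_eval : ∀ y, eval y g = eval y r := by
        intro y
        have := congrFun hc y
        simp only [Finset.sum_apply, Pi.smul_apply, smul_eq_mul] at this
        rw [hgdef, map_sum]
        simpa [smul_eval] using this
      have hg_red : ∀ d ∈ g.support, ∃ j, c j ≠ 0 ∧ d ∈ (p j).support := by
        intro d hd
        have := support_sum hd
        obtain ⟨j, _, hj⟩ := Finset.mem_biUnion.1 this
        have hcj : c j ≠ 0 := by
          intro h
          rw [h, zero_smul] at hj
          simp at hj
        exact ⟨j, hcj, support_smul hj⟩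
      have hrg : r = g := by
        have hsub : ∀ y, eval y (r - g) = 0 := by
          intro y
          rw [map_sub, hg_eval, sub_self]
        have hmem : ∀ s ∈ (r - g).support, ∀ i, s i < Fintype.card K := by
          intro s hs i
          have := support_sub _ _ _ hs
          rcases Finset.mem_union.1 this with h | h
          · exact hr2 s h i
          · obtain ⟨j, _, hj⟩ := hg_red s h
            exact hP j s hj i
        have := reduced_eval_zero (r - g) hmem hsub
        rwa [sub_eq_zero] at this
      have hex : ∃ j, c j ≠ 0 := by
        by_contra hcon
        push_neg at hcon
        apply hrne
        rw [hrg, hgdef]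
        apply Finset.sum_eq_zero
        intro j _
        rw [hcon j, zero_smul]
      obtain ⟨j1, hj1⟩ := hex
      obtain ⟨j0, hj0mem, hj0max⟩ := Finset.exists_max_image
        (Finset.univ.filter (fun j => c j ≠ 0))
        (fun j => mo.toSyn (leadingMonomial mo (p j)))
        ⟨j1, Finset.mem_filter.2 ⟨Finset.mem_univ _, hj1⟩⟩
      have hj0ne : c j0 ≠ 0 := (Finset.mem_filter.1 hj0mem).2
      have hcj0 : coeff (leadingMonomial mo (p j0)) g = c j0 := by
        rw [hgdef, coeff_sum]
        rw [Finset.sum_eq_single j0]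
        · rw [coeff_smul, hlc j0, smul_eq_mul, mul_one]
        · intro j _ hj
          rw [coeff_smul, hrref j0 j (Ne.symm hj), smul_eq_mul, mul_zero]
        · intro h
          exact absurd (Finset.mem_univ j0) h
      have hlm_g : leadingMonomial mo r = leadingMonomial mo (p j0) := by
        apply mo.toSyn.injective
        apply le_antisymm
        · apply toSyn_lm_le
          intro d hd
          rw [hrg] at hd
          obtain ⟨j, hcj, hj⟩ := hg_red d hd
          refine le_trans (le_toSyn_lm mo hj) ?_
          exact hj0max j (Finset.mem_filter.2 ⟨Finset.mem_univ _, hcj⟩)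
        · apply le_toSyn_lm
          rw [hrg, mem_support_iff, hcj0]
          exact hj0ne
      refine ⟨Sum.inr j0, by simpa [hGdef] using hpne j0, ?_⟩
      have : leadingMonomial mo (G (Sum.inr j0)) = leadingMonomial mo f := by
        simp only [hGdef, Sum.elim_inr]
        rw [← hlm_g, hlm_rf]
      rw [this]
  -- span ≤ I
  have hle : Ideal.span (Set.range G) ≤ I := by
    rw [Ideal.span_le]
    rintro _ ⟨i, rfl⟩
    exact hGI i
  -- I ≤ span, by induction on the leading monomial
  have hge : ∀ f ∈ I, f ∈ Ideal.span (Set.range G) := by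
    suffices H : ∀ s : mo.syn, ∀ f : MvPolynomial (Fin n) K,
        mo.toSyn (leadingMonomial mo f) ≤ s → f ∈ I → f ∈ Ideal.span (Set.range G) by
      intro f hf
      exact H _ f le_rfl hf
    intro s
    induction s using WellFoundedLT.induction with
    | _ s ih =>
    intro f hfs hfI
    by_cases hf0 : f = 0
    · rw [hf0]; exact Ideal.zero_mem _
    obtain ⟨i, hGine, hdvd⟩ := key f hfI hf0
    set lg := leadingMonomial mo (G i) with hlg
    set lf := leadingMonomial mo f with hlf
    have hlgc : coeff lg (G i) ≠ 0 := lm_coeff_ne_zero mo hGine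
    set δ : Fin n →₀ ℕ := lf - lg with hδ
    have haddδ : δ + lg = lf := tsub_add_cancel_of_le hdvd
    set cc : K := coeff lf f / coeff lg (G i) with hcc
    set t : MvPolynomial (Fin n) K := (monomial δ cc) * G i with ht
    have htspan : t ∈ Ideal.span (Set.range G) :=
      Ideal.mul_mem_left _ _ (Ideal.subset_span ⟨i, rfl⟩)
    set f' : MvPolynomial (Fin n) K := f - t with hf'
    have hf'I : f' ∈ I := Ideal.sub_mem _ hfI (hle htspan)
    have hδle : δ ≤ lf := by
      rw [← haddδ]; exact le_add_right le_rfl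
    have hlfδ : lf - δ = lg := by
      rw [← haddδ, add_tsub_cancel_left]
    have hcoefflf : coeff lf f' = 0 := by
      rw [hf', coeff_sub, ht, coeff_monomial_mul', if_pos hδle, hlfδ, hcc,
        div_mul_cancel₀ _ hlgc, sub_self]
    have hbound : ∀ d ∈ f'.support, mo.toSyn d ≤ mo.toSyn lf := by
      intro d hd
      rw [hf'] at hd
      have := support_sub _ _ _ hd
      rcases Finset.mem_union.1 this with h | h
      · exact le_toSyn_lm mo h
      · rw [mem_support_iff, ht, coeff_monomial_mul'] at h
        by_cases hdle : δ ≤ d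
        · rw [if_pos hdle] at h
          have h2 : coeff (d - δ) (G i) ≠ 0 := by
            intro hh; rw [hh, mul_zero] at h; exact h rfl
          have h3 : mo.toSyn (d - δ) ≤ mo.toSyn lg :=
            le_toSyn_lm mo (mem_support_iff.2 h2)
          have h4 : δ + (d - δ) = d := add_tsub_cancel_of_le hdle
          calc mo.toSyn d = mo.toSyn δ + mo.toSyn (d - δ) := by rw [← map_add, h4]
            _ ≤ mo.toSyn δ + mo.toSyn lg := by exact add_le_add le_rfl h3
            _ = mo.toSyn lf := by rw [← map_add, haddδ]
        · rw [if_neg hdle] at h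
          exact absurd rfl h
    by_cases hf'0 : f' = 0
    · have : f = t := by
        rw [hf', sub_eq_zero] at hf'0
        exact hf'0
      rw [this]
      exact htspan
    · have hltlm : mo.toSyn (leadingMonomial mo f') < mo.toSyn lf := by
        apply lt_of_le_of_ne (hbound _ (lm_mem_support mo hf'0))
        intro h
        have : leadingMonomial mo f' = lf := mo.toSyn.injective h
        apply lm_coeff_ne_zero mo hf'0
        rw [this, hcoefflf]
      have hf'span := ih _ (lt_of_lt_of_le hltlm hfs) f' le_rfl hf'I
      have : f = f' + t := by rw [hf']; ring
      rw [this]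
      exact Ideal.add_mem _ hf'span htspan
  exact ⟨le_antisymm hle hge, key⟩
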